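/- Single-item optimality when a_⊥ dominates: Suppose u(a_⊥) = 1 and w(a) < w(a_⊥) for every regular item a. Then for any regular items a, a', the cascading value satisfies f((a, a', a_⊥), u, w) ≤ f((a, a_⊥), u, w); consequently, among all nonempty lists of regular items followed by a_⊥, some single-item list (a*, a_⊥) with a* maximizing u(a)·w(a) + (1−u(a))·w(a_⊥) achieves the maximum of f. -/

import Mathlib

/-- The cascading reward function. -/
noncomputable def cascadeF {α : Type*} (u w : α → ℝ) : List α → ℝ
  | [] => 0
  | a :: t => u a * w a + (1 - u a) * cascadeF u w t

/-- Single-item optimality when `a_⊥` dominates: if every regular item has weight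
below `w(a_⊥)` (and `u(a_⊥) = 1`), then appending a second item never helps, and a
single item maximizing `u(a)w(a) + (1−u(a))w(a_⊥)` is optimal among all nonempty
lists of distinct regular items followed by `a_⊥`. -/
theorem single_item_optimal {α : Type*} [DecidableEq α] (u w : α → ℝ) (bot : α)
    (N : Finset α) (hN : N.Nonempty) (hbN : bot ∉ N)
    (hu : ∀ a, 0 ≤ u a ∧ u a ≤ 1) (hbot : u bot = 1)
    (hw : ∀ a ∈ N, w a < w bot) :
    (∀ a ∈ N, ∀ a' ∈ N, cascadeF u w [a, a', bot] ≤ cascadeF u w [a, bot]) ∧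
    ∃ astar ∈ N,
      (∀ a ∈ N, u a * w a + (1 - u a) * w bot
          ≤ u astar * w astar + (1 - u astar) * w bot) ∧
      ∀ L : List α, L ≠ [] → L.Nodup → (∀ a ∈ L, a ∈ N) →
        cascadeF u w (L ++ [bot]) ≤ cascadeF u w [astar, bot] := by

  have key : ∀ t : List α, (∀ a ∈ t, a ∈ N) → cascadeF u w (t ++ [bot]) ≤ w bot := by
    intro t
    induction t with
    | nil => simp [cascadeF, hbot]
    | cons a t ih =>
      intro h
      have ha := h a List.mem_cons_self
      have ht : ∀ b ∈ t, b ∈ N := fun b hb => h b (List.mem_cons_of_mem a hb)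
      have hua := hu a
      have : cascadeF u w ((a :: t) ++ [bot])
          = u a * w a + (1 - u a) * cascadeF u w (t ++ [bot]) := rfl
      rw [this]
      have h1 : u a * w a ≤ u a * w bot :=
        mul_le_mul_of_nonneg_left (le_of_lt (hw a ha)) hua.1
      have h2 : (1 - u a) * cascadeF u w (t ++ [bot]) ≤ (1 - u a) * w bot :=
        mul_le_mul_of_nonneg_left (ih ht) (by linarith [hua.2])
      nlinarith
  constructor
  · intro a ha a' ha'
    have hua := hu a
    have h2 : cascadeF u w [a', bot] ≤ w bot := key [a'] (by simpa using ha')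
    have e1 : cascadeF u w [a, a', bot]
        = u a * w a + (1 - u a) * cascadeF u w [a', bot] := rfl
    have e2 : cascadeF u w [a, bot] = u a * w a + (1 - u a) * (u bot * w bot + (1 - u bot) * 0) := rfl
    rw [e1, e2, hbot]
    have : (0:ℝ) ≤ 1 - u a := by linarith [hua.2]
    nlinarith
  · obtain ⟨astar, hastar, hmax⟩ := N.exists_max_image (fun a => u a * w a + (1 - u a) * w bot) hN
    refine ⟨astar, hastar, hmax, ?_⟩
    intro L hne hnd hmem
    obtain ⟨a, t, rfl⟩ := List.exists_cons_of_ne_nil hne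
    have ha := hmem a List.mem_cons_self
    have hua := hu a
    have e1 : cascadeF u w ((a :: t) ++ [bot])
        = u a * w a + (1 - u a) * cascadeF u w (t ++ [bot]) := rfl
    have e2 : cascadeF u w [astar, bot]
        = u astar * w astar + (1 - u astar) * (u bot * w bot + (1 - u bot) * 0) := rfl
    rw [e1, e2, hbot]
    have h1 : cascadeF u w (t ++ [bot]) ≤ w bot :=
      key t (fun b hb => hmem b (List.mem_cons_of_mem a hb))
    have h2 : (1 - u a) * cascadeF u w (t ++ [bot]) ≤ (1 - u a) * w bot :=
      mul_le_mul_of_nonneg_left h1 (by linarith [hua.2])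
    have h3 := hmax a ha
    nlinarith
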